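/- Let 0 < α < 1 and λ ∈ ℝ. The function y₂(t) = t^{α} E_{2α,α+1}(−λ t^{2α}) satisfies the fractional differential equation −(^cD^α_{0+}(D^α_{0+} y₂))(t) = λ y₂(t) for every t > 0. -/

import Mathlib

open MeasureTheory intervalIntegral Real

/-- Two-parameter Mittag–Leffler function `E_{δ,θ}(z) = ∑ z^k / Γ(δk + θ)`. -/
noncomputable def mittagLeffler (δ θ z : ℝ) : ℝ :=
  ∑' k : ℕ, z ^ k / Real.Gamma (δ * k + θ)

/-- Left Riemann–Liouville fractional derivative of order `α` (0 < α < 1) based at `0`: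
`(D^α_{0+} f)(t) = d/dt [ (1/Γ(1−α)) ∫_0^t f(s) (t−s)^{−α} ds ]`. -/
noncomputable def RLderivLeft0 (α : ℝ) (f : ℝ → ℝ) : ℝ → ℝ :=
  deriv (fun t => (1 / Real.Gamma (1 - α)) * ∫ s in (0:ℝ)..t, f s * (t - s) ^ (-α))

/-- Left Caputo fractional derivative of order `α` (0 < α < 1) based at `0`:
`(^cD^α_{0+} f)(t) = (1/Γ(1−α)) ∫_0^t f′(s) (t−s)^{−α} ds`. -/
noncomputable def CaputoDerivLeft0 (α : ℝ) (f : ℝ → ℝ) (t : ℝ) : ℝ :=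
  (1 / Real.Gamma (1 - α)) * ∫ s in (0:ℝ)..t, deriv f s * (t - s) ^ (-α)

open Set Filter Topology Nat

/-- Summability of Mittag-Leffler-type series with absolute values. -/
private lemma summable_gamma_aux {δ : ℝ} (hδ : 0 < δ) (θ : ℝ) {r : ℝ} (hr : 0 ≤ r) :
    Summable (fun k : ℕ => r ^ k / |Real.Gamma (δ * k + θ)|) := by
  set M : ℝ := (max 1 (2 * r)) ^ (2 / δ) with hMdef
  have hM1 : (1:ℝ) ≤ M := Real.one_le_rpow (le_max_left _ _) (by positivity)
  have hM0 : (0:ℝ) ≤ M := by linarith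
  set C : ℝ := ∑' n : ℕ, M ^ n / n ! with hCdef
  have hC : ∀ n : ℕ, M ^ n / n ! ≤ C :=
    fun n => Summable.le_tsum (Real.summable_pow_div_factorial M) n (fun j _ => by positivity)
  set N : ℕ := ⌈(2 * (2 - θ)) / δ⌉₊ with hNdef
  have key : ∀ n : ℕ, r ^ (n + N) / |Real.Gamma (δ * ((n + N : ℕ) : ℝ) + θ)| ≤ (M * C) * (1/2) ^ (n + N) := by
    intro n
    set k : ℕ := n + N with hk
    have hkN : (N : ℝ) ≤ k := by exact_mod_cast Nat.le_add_left N n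
    have hceil : (2 * (2 - θ)) / δ ≤ (N : ℝ) := Nat.le_ceil _
    have hargs : 2 * (2 - θ) ≤ δ * k := by
      have := (div_le_iff₀ hδ).mp (hceil.trans hkN)
      linarith
    set m : ℕ := ⌊δ * k / 2⌋₊ with hm
    have hm_le : (m : ℝ) ≤ δ * k / 2 := Nat.floor_le (by positivity)
    have hm_lt : δ * k / 2 < m + 1 := Nat.lt_floor_add_one _
    have harg2 : ((m : ℝ) + 2) ≤ δ * k + θ := by linarith
    have hΓpos : 0 < Real.Gamma (δ * k + θ) :=
      Real.Gamma_pos_of_pos (by have : (0:ℝ) ≤ (m:ℝ) := Nat.cast_nonneg m; linarith)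
    have hΓfac : (m ! : ℝ) ≤ Real.Gamma (δ * k + θ) := by
      have h1 : Real.Gamma ((m:ℝ) + 2) ≤ Real.Gamma (δ * k + θ) := by
        rcases eq_or_lt_of_le harg2 with h | h
        · rw [h]
        · have hc0 : (0:ℝ) ≤ (m:ℝ) := Nat.cast_nonneg m
          exact le_of_lt (Real.Gamma_strictMonoOn_Ici
            (Set.mem_Ici.mpr (by linarith)) (Set.mem_Ici.mpr (by linarith)) h)
      have h2 : Real.Gamma ((m:ℝ) + 2) = ((m+1)! : ℝ) := by
        have : ((m:ℝ) + 2) = ((m + 1 : ℕ) : ℝ) + 1 := by push_cast; ring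
        rw [this, Real.Gamma_nat_eq_factorial]
      have h3 : (m ! : ℝ) ≤ ((m+1)! : ℝ) := by
        exact_mod_cast Nat.factorial_le (Nat.le_succ m)
      rw [h2] at h1; linarith
    have hfacpos : (0:ℝ) < (m ! : ℝ) := by exact_mod_cast Nat.factorial_pos m
    have hrpow : r ^ k * 2 ^ k ≤ M ^ (m + 1) := by
      have h1 : r ^ k * 2 ^ k = (2 * r) ^ k := by rw [mul_pow]; ring
      have h2 : (2 * r) ^ k ≤ (max 1 (2*r)) ^ k :=
        pow_le_pow_left₀ (by positivity) (le_max_right _ _) k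
      have hk2 : (k : ℝ) ≤ (2 / δ) * (m + 1) := by
        rw [div_mul_eq_mul_div, le_div_iff₀ hδ]
        nlinarith
      have h3 : (max 1 (2*r)) ^ (k:ℝ) ≤ (max 1 (2*r)) ^ ((2/δ) * (m+1)) :=
        Real.rpow_le_rpow_of_exponent_le (le_max_left _ _) hk2
      have h4 : (max 1 (2*r)) ^ ((2/δ) * ((m:ℝ)+1)) = M ^ ((m:ℝ)+1) := by
        rw [Real.rpow_mul (by positivity)]
      have h5 : M ^ ((m:ℝ)+1) = M ^ (m+1) := by
        rw [show ((m:ℝ)+1) = ((m+1:ℕ):ℝ) by push_cast; ring, Real.rpow_natCast]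
      calc r ^ k * 2 ^ k = (2*r)^k := h1
        _ ≤ (max 1 (2*r))^k := h2
        _ = (max 1 (2*r)) ^ (k:ℝ) := (Real.rpow_natCast _ k).symm
        _ ≤ (max 1 (2*r)) ^ ((2/δ) * ((m:ℝ)+1)) := h3
        _ = M ^ (m+1) := by rw [h4, h5]
    have : r ^ k / |Real.Gamma (δ * k + θ)| ≤ M ^ (m+1) / (2 ^ k * m !) := by
      rw [abs_of_pos hΓpos]
      rw [div_le_div_iff₀ hΓpos (by positivity)]
      calc r ^ k * (2 ^ k * (m ! : ℝ)) = (r ^ k * 2 ^ k) * m ! := by ring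
        _ ≤ M ^ (m+1) * m ! := by
            exact mul_le_mul_of_nonneg_right hrpow (le_of_lt hfacpos)
        _ ≤ M ^ (m+1) * Real.Gamma (δ * k + θ) := by
            exact mul_le_mul_of_nonneg_left hΓfac (by positivity)
    refine this.trans ?_
    have : M ^ (m+1) / (2 ^ k * (m ! : ℝ)) = (M * (M ^ m / m !)) * (1/2)^k := by
      field_simp
      have h2 : (2:ℝ)^k * (1/2)^k = 1 := by rw [← mul_pow]; norm_num
      linear_combination (-(M*M^m)) * h2
    rw [this]
    have hhalf : (0:ℝ) ≤ (1/2:ℝ)^k := by positivity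
    apply mul_le_mul_of_nonneg_right _ hhalf
    exact mul_le_mul_of_nonneg_left (hC m) hM0
  have hnn : ∀ k : ℕ, 0 ≤ r ^ k / |Real.Gamma (δ * k + θ)| := fun k => by positivity
  rw [← summable_nat_add_iff N]
  apply Summable.of_nonneg_of_le (fun n => hnn (n + N)) key
  apply Summable.mul_left
  exact (summable_geometric_of_lt_one (by norm_num) (by norm_num)).comp_injective
    (add_left_injective N)

/-- Real Beta integral on `[0, t]`. -/
private lemma beta_real {a b t : ℝ} (ha : 0 < a) (hb : 0 < b) (ht : 0 < t) :
    ∫ s in (0:ℝ)..t, s ^ (a - 1) * (t - s) ^ (b - 1) =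
      Real.Gamma a * Real.Gamma b / Real.Gamma (a + b) * t ^ (a + b - 1) := by
  have hab : (0:ℝ) < Real.Gamma (a + b) := Real.Gamma_pos_of_pos (by linarith)
  have h1 : (∫ s in (0:ℝ)..t, ((s:ℂ) ^ ((a:ℂ) - 1) * ((t:ℂ) - (s:ℂ)) ^ ((b:ℂ) - 1)))
      = (t:ℂ) ^ ((a:ℂ) + (b:ℂ) - 1) * Complex.betaIntegral a b :=
    Complex.betaIntegral_scaled a b ht
  have h2 : Complex.Gamma a * Complex.Gamma b
      = Complex.Gamma ((a:ℂ) + b) * Complex.betaIntegral a b :=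
    Complex.Gamma_mul_Gamma_eq_betaIntegral (by simpa using ha) (by simpa using hb)
  have hβ : Complex.betaIntegral a b
      = ((Real.Gamma a * Real.Gamma b / Real.Gamma (a + b) : ℝ) : ℂ) := by
    have hG : Complex.Gamma ((a:ℂ) + b) = ((Real.Gamma (a+b) : ℝ) : ℂ) := by
      rw [show ((a:ℂ) + b) = ((a+b : ℝ) : ℂ) by push_cast; ring, Complex.Gamma_ofReal]
    have hGa : Complex.Gamma a = ((Real.Gamma a : ℝ) : ℂ) := Complex.Gamma_ofReal a
    have hGb : Complex.Gamma b = ((Real.Gamma b : ℝ) : ℂ) := Complex.Gamma_ofReal b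
    have hne : ((Real.Gamma (a+b) : ℝ) : ℂ) ≠ 0 := by
      exact_mod_cast hab.ne'
    field_simp [hG, hGa, hGb] at h2 ⊢
    rw [hG, hGa, hGb] at h2
    rw [Complex.ofReal_div, Complex.ofReal_mul, h2, mul_div_cancel_left₀ _ hne]
  -- relate complex integral to real integral
  have h3 : (∫ s in (0:ℝ)..t, ((s:ℂ) ^ ((a:ℂ) - 1) * ((t:ℂ) - (s:ℂ)) ^ ((b:ℂ) - 1)))
      = ((∫ s in (0:ℝ)..t, s ^ (a - 1) * (t - s) ^ (b - 1) : ℝ) : ℂ) := by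
    rw [intervalIntegral.integral_of_le ht.le, intervalIntegral.integral_of_le ht.le]
    have step : ∫ (x : ℝ) in Ioc 0 t, ((x : ℂ) ^ ((a:ℂ) - 1) * ((t:ℂ) - (x:ℂ)) ^ ((b:ℂ) - 1)) ∂volume
        = ∫ (x : ℝ) in Ioc 0 t, (((x ^ (a - 1) * (t - x) ^ (b - 1) : ℝ)) : ℂ) ∂volume := by
      apply MeasureTheory.setIntegral_congr_fun measurableSet_Ioc
      intro s hs
      have hs0 : (0:ℝ) ≤ s := le_of_lt hs.1
      have hts : (0:ℝ) ≤ t - s := by linarith [hs.2]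
      simp only
      rw [Complex.ofReal_mul, Complex.ofReal_cpow hs0, Complex.ofReal_cpow hts]
      push_cast
      ring
    rw [step]
    exact integral_ofReal
  have h4 : ((t:ℂ)) ^ ((a:ℂ) + (b:ℂ) - 1) = ((t ^ (a + b - 1) : ℝ) : ℂ) := by
    rw [Complex.ofReal_cpow ht.le]
    push_cast
    ring_nf
  rw [h3, hβ, h4] at h1
  have := (Complex.ofReal_inj).mp (by exact_mod_cast h1)
  rw [this]; ring

/-- Integrability of the Beta integrand. -/
private lemma beta_integrable {a b t : ℝ} (ha : 0 < a) (hb : 0 < b) (ht : 0 < t) :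
    IntervalIntegrable (fun s => s ^ (a - 1) * (t - s) ^ (b - 1)) volume 0 t := by
  have half : ∀ {u v : ℝ}, 0 < u → 0 < v →
      IntervalIntegrable (fun s => s ^ (u - 1) * (t - s) ^ (v - 1)) volume 0 (t/2) := by
    intro u v hu hv
    have base : IntervalIntegrable (fun s : ℝ => s ^ (u - 1)) volume 0 (t/2) :=
      intervalIntegral.intervalIntegrable_rpow' (by linarith)
    set C : ℝ := max ((t/2) ^ (v-1)) (t ^ (v-1)) with hC
    rw [intervalIntegrable_iff_integrableOn_Ioc_of_le (by linarith)] at base ⊢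
    apply Integrable.mono' (base.const_mul C)
    · apply ContinuousOn.aestronglyMeasurable _ measurableSet_Ioc
      intro s hs
      apply ContinuousAt.continuousWithinAt
      apply ContinuousAt.mul
      · exact (Real.continuousAt_rpow_const s (u-1) (Or.inl hs.1.ne')).comp continuousAt_id
      · have hts : t - s ≠ 0 := by have := hs.2; intro h; nlinarith [hs.1]
        exact (Real.continuousAt_rpow_const (t-s) (v-1) (Or.inl hts)).comp
          (continuousAt_const.sub continuousAt_id)
    · filter_upwards [ae_restrict_mem measurableSet_Ioc] with s hs
      have hs0 : 0 < s := hs.1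
      have hst : s ≤ t/2 := hs.2
      have hts : 0 < t - s := by linarith
      have htsle : t - s ≤ t := by linarith
      have htsge : t/2 ≤ t - s := by linarith
      have hbound : (t - s) ^ (v-1) ≤ C := by
        rcases le_or_gt 0 (v-1) with hv1 | hv1
        · exact le_max_of_le_right (Real.rpow_le_rpow hts.le htsle hv1)
        · exact le_max_of_le_left (Real.rpow_le_rpow_of_nonpos (by linarith) htsge hv1.le)
      have : ‖s ^ (u-1) * (t - s) ^ (v-1)‖ = s ^ (u-1) * (t - s) ^ (v-1) := by
        rw [Real.norm_eq_abs, abs_of_nonneg (by positivity)]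
      rw [this, mul_comm (C : ℝ) _]
      exact mul_le_mul_of_nonneg_left hbound (by positivity)
  have p1 := half ha hb
  have p2' := (half hb ha).comp_sub_left t
  have p2 : IntervalIntegrable (fun s => s ^ (a - 1) * (t - s) ^ (b - 1)) volume (t/2) t := by
    have heq : (fun x : ℝ => (t - x) ^ (b - 1) * (t - (t - x)) ^ (a - 1))
        = fun s : ℝ => s ^ (a - 1) * (t - s) ^ (b - 1) := by
      funext x
      rw [show t - (t - x) = x by ring]
      ring
    rw [heq] at p2'
    simpa [show t - t/2 = t/2 by ring] using p2'.symm
  exact p1.trans p2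

private lemma summable_abs_ps {c : ℕ → ℝ}
    (hc : ∀ r : ℝ, 0 ≤ r → Summable fun k => |c k| * r ^ k) (x : ℝ) :
    Summable fun k : ℕ => c k * x ^ k := by
  apply Summable.of_abs
  apply Summable.of_nonneg_of_le (fun k => abs_nonneg _) _ (hc (|x|) (abs_nonneg x))
  intro k
  rw [abs_mul, abs_pow]

private lemma summable_pow_mul {c : ℕ → ℝ}
    (hc : ∀ r : ℝ, 0 ≤ r → Summable fun k => |c k| * r ^ k) (x : ℝ) :
    Summable fun k : ℕ => c k * ((k : ℝ) * x ^ (k - 1)) := by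
  set R : ℝ := |x| + 1 with hR
  have hR1 : (1:ℝ) ≤ R := by rw [hR]; linarith [abs_nonneg x]
  apply Summable.of_abs
  apply Summable.of_nonneg_of_le (fun k => abs_nonneg _) _ (hc (2*R) (by linarith))
  intro k
  rw [abs_mul, abs_mul, Nat.abs_cast, abs_pow]
  have h1 : |x| ^ (k-1) ≤ R ^ (k-1) := pow_le_pow_left₀ (abs_nonneg x) (by simp [hR]) _
  have h2 : R ^ (k-1) ≤ R ^ k := pow_le_pow_right₀ hR1 (Nat.sub_le k 1)
  have h3 : (k : ℝ) ≤ 2 ^ k := by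
    exact_mod_cast (Nat.lt_two_pow_self (n := k)).le
  have h4 : (k:ℝ) * |x| ^ (k-1) ≤ 2 ^ k * R ^ k :=
    mul_le_mul h3 (h1.trans h2) (by positivity) (by positivity)
  calc |c k| * ((k:ℝ) * |x| ^ (k-1)) ≤ |c k| * (2 ^ k * R ^ k) :=
        mul_le_mul_of_nonneg_left h4 (abs_nonneg _)
    _ = |c k| * (2*R)^k := by rw [mul_pow]

private lemma hasDerivAt_ps {c : ℕ → ℝ}
    (hc : ∀ r : ℝ, 0 ≤ r → Summable fun k => |c k| * r ^ k) (x : ℝ) :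
    HasDerivAt (fun u : ℝ => ∑' k : ℕ, c k * u ^ k)
      (∑' k : ℕ, c k * ((k : ℝ) * x ^ (k - 1))) x := by
  set R : ℝ := |x| + 1 with hR
  have hR1 : (1:ℝ) ≤ R := by rw [hR]; linarith [abs_nonneg x]
  apply hasDerivAt_tsum_of_isPreconnected (u := fun k => |c k| * (2*R)^k)
    (hc (2*R) (by linarith)) (Metric.isOpen_ball (x := (0:ℝ)) (ε := R))
    ((convex_ball (0:ℝ) R).isPreconnected)
    (fun n y _ => (hasDerivAt_pow n y).const_mul (c n))
  · intro k y hy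
    rw [Metric.mem_ball, Real.dist_eq, sub_zero] at hy
    rw [Real.norm_eq_abs, abs_mul, abs_mul, Nat.abs_cast, abs_pow]
    have h1 : |y| ^ (k-1) ≤ R ^ (k-1) := pow_le_pow_left₀ (abs_nonneg y) hy.le _
    have h2 : R ^ (k-1) ≤ R ^ k := pow_le_pow_right₀ hR1 (Nat.sub_le k 1)
    have h3 : (k : ℝ) ≤ 2 ^ k := by exact_mod_cast (Nat.lt_two_pow_self (n := k)).le
    have h4 : (k:ℝ) * |y| ^ (k-1) ≤ 2 ^ k * R ^ k :=
      mul_le_mul h3 (h1.trans h2) (by positivity) (by positivity)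
    calc |c k| * ((k:ℝ) * |y| ^ (k-1)) ≤ |c k| * (2 ^ k * R ^ k) :=
          mul_le_mul_of_nonneg_left h4 (abs_nonneg _)
      _ = |c k| * (2*R)^k := by rw [mul_pow]
  · exact Metric.mem_ball_self (by linarith)
  · exact summable_abs_ps hc 0
  · rw [Metric.mem_ball, Real.dist_eq, sub_zero, hR]
    linarith

private lemma swap_ml {t : ℝ} (ht : 0 < t) (c p : ℕ → ℝ) {b : ℝ} (hb : 0 < b)
    (hp : ∀ k, c k = 0 ∨ 0 < p k)
    (hs : Summable fun k => |c k| *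
        (Real.Gamma (p k) * Real.Gamma b / Real.Gamma (p k + b) * t ^ (p k + b - 1))) :
    ∫ s in Set.Ioo (0:ℝ) t, (∑' k : ℕ, c k * (s ^ (p k - 1) * (t - s) ^ (b - 1))) =
      ∑' k : ℕ, c k * (Real.Gamma (p k) * Real.Gamma b / Real.Gamma (p k + b) *
        t ^ (p k + b - 1)) := by
  set V : ℕ → ℝ := fun k => Real.Gamma (p k) * Real.Gamma b / Real.Gamma (p k + b) *
      t ^ (p k + b - 1) with hV
  set f : ℕ → ℝ → ℝ := fun k s => c k * (s ^ (p k - 1) * (t - s) ^ (b - 1)) with hf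
  have hmeas : ∀ k, AEStronglyMeasurable (f k) (volume.restrict (Set.Ioo 0 t)) := by
    intro k
    apply ContinuousOn.aestronglyMeasurable _ measurableSet_Ioo
    intro s hs'
    apply ContinuousAt.continuousWithinAt
    apply ContinuousAt.mul continuousAt_const
    apply ContinuousAt.mul
    · exact (Real.continuousAt_rpow_const s _ (Or.inl hs'.1.ne')).comp continuousAt_id
    · have hts : t - s ≠ 0 := sub_ne_zero.mpr (ne_of_gt hs'.2)
      exact (Real.continuousAt_rpow_const (t-s) _ (Or.inl hts)).comp
        (continuousAt_const.sub continuousAt_id)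
  have hint : ∀ k, 0 < p k →
      IntegrableOn (fun s => s ^ (p k - 1) * (t - s) ^ (b-1)) (Set.Ioo 0 t) := by
    intro k hpk
    have h2 := beta_integrable hpk hb ht
    rw [intervalIntegrable_iff_integrableOn_Ioc_of_le ht.le] at h2
    exact h2.mono_set Set.Ioo_subset_Ioc_self
  have hval : ∀ k, 0 < p k →
      ∫ s in Set.Ioo (0:ℝ) t, (s ^ (p k - 1) * (t - s) ^ (b-1)) = V k := by
    intro k hpk
    rw [← MeasureTheory.integral_Ioc_eq_integral_Ioo, ← intervalIntegral.integral_of_le ht.le]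
    exact beta_real hpk hb ht
  have hVnn : ∀ k, 0 ≤ |c k| * V k := by
    intro k
    rcases hp k with h | h
    · simp [h]
    · have h1 : 0 < Real.Gamma (p k) := Real.Gamma_pos_of_pos h
      have h2 : 0 < Real.Gamma b := Real.Gamma_pos_of_pos hb
      have h3 : 0 < Real.Gamma (p k + b) := Real.Gamma_pos_of_pos (by linarith)
      have h4 : 0 < t ^ (p k + b - 1) := Real.rpow_pos_of_pos ht _
      positivity
  have hlint : ∀ k, (∫⁻ s in Set.Ioo (0:ℝ) t, ‖f k s‖₊) = ENNReal.ofReal (|c k| * V k) := by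
    intro k
    rcases hp k with h | h
    · simp [hf, h]
    · have hi0 : IntegrableOn (f k) (Set.Ioo (0:ℝ) t) := (hint k h).const_mul (c k)
      have hi : Integrable (fun s => ‖f k s‖) (volume.restrict (Set.Ioo 0 t)) := hi0.norm
      have hnn : 0 ≤ᵐ[volume.restrict (Set.Ioo (0:ℝ) t)] fun s => ‖f k s‖ :=
        Filter.Eventually.of_forall fun s => norm_nonneg _
      have heq := MeasureTheory.ofReal_integral_eq_lintegral_ofReal hi hnn
      have hnormint : ∫ s in Set.Ioo (0:ℝ) t, ‖f k s‖ = |c k| * V k := by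
        rw [MeasureTheory.setIntegral_congr_fun measurableSet_Ioo
          (g := fun s => |c k| * (s ^ (p k - 1) * (t - s) ^ (b-1))) ?_ ]
        · rw [MeasureTheory.integral_const_mul, hval k h]
        · intro s hs'
          have h1 : (0:ℝ) ≤ s ^ (p k - 1) := Real.rpow_nonneg hs'.1.le _
          have h2 : (0:ℝ) ≤ (t - s) ^ (b-1) := Real.rpow_nonneg (by linarith [hs'.2]) _
          simp only [hf, Real.norm_eq_abs, abs_mul]
          rw [abs_of_nonneg h1, abs_of_nonneg h2]
      rw [← hnormint, heq]
      simp only [ofReal_norm, enorm_eq_nnnorm]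
  have hne : (∑' k, ∫⁻ s in Set.Ioo (0:ℝ) t, ‖f k s‖₊) ≠ ⊤ := by
    rw [tsum_congr hlint, ← ENNReal.ofReal_tsum_of_nonneg hVnn hs]
    exact ENNReal.ofReal_ne_top
  rw [show (fun s => ∑' k : ℕ, c k * (s ^ (p k - 1) * (t - s) ^ (b - 1)))
      = (fun s => ∑' k : ℕ, f k s) from rfl]
  rw [MeasureTheory.integral_tsum hmeas hne]
  refine tsum_congr fun k => ?_
  rcases hp k with h | h
  · simp [hf, h]
  · show (∫ s in Set.Ioo (0:ℝ) t, c k * (s ^ (p k - 1) * (t - s) ^ (b-1))) = c k * V k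
    rw [MeasureTheory.integral_const_mul, hval k h]

private lemma summable_of_le_ml {δ θ : ℝ} (hδ : 0 < δ) {C r : ℝ} (hr : 0 ≤ r) (f : ℕ → ℝ)
    (h : ∀ k, |f k| ≤ C * (r ^ k / |Real.Gamma (δ * k + θ)|)) : Summable f :=
  Summable.of_abs (Summable.of_nonneg_of_le (fun k => abs_nonneg _) h
    ((summable_gamma_aux hδ θ hr).mul_left C))

theorem stmt11 (α lam : ℝ) (hα : 0 < α ∧ α < 1)
    (y₂ : ℝ → ℝ)
    (hy₂ : ∀ t, y₂ t = t ^ α * mittagLeffler (2 * α) (α + 1) (-lam * t ^ (2 * α))) :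
    ∀ t : ℝ, 0 < t →
      -(CaputoDerivLeft0 α (RLderivLeft0 α y₂) t) = lam * y₂ t := by
  obtain ⟨hα0, hα1⟩ := hα
  have hδ : (0:ℝ) < 2 * α := by linarith
  have h1α : (0:ℝ) < 1 - α := by linarith
  have hΓ1α : 0 < Real.Gamma (1 - α) := Real.Gamma_pos_of_pos h1α
  set bc : ℕ → ℝ := fun k => (-lam) ^ k / Real.Gamma (2*α*k + 2) with hbc
  set ac : ℕ → ℝ := fun k => (-lam) ^ k / Real.Gamma (2*α*k + 1) with hac
  set ec : ℕ → ℝ := fun k => (-lam) ^ k / Real.Gamma (2*α*k) with hec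
  have hGpos : ∀ (θ:ℝ) (k : ℕ), 0 < θ → 0 < Real.Gamma (2*α*k + θ) := by
    intro θ k hθ; apply Real.Gamma_pos_of_pos; positivity
  have hcgen : ∀ (θ:ℝ), 0 < θ → ∀ r : ℝ, 0 ≤ r →
      Summable fun k : ℕ => |(-lam)^k / Real.Gamma (2*α*k+θ)| * r ^ k := by
    intro θ hθ r hr
    apply (summable_gamma_aux hδ θ (r := |lam| * r) (by positivity)).congr
    intro k
    rw [abs_div, abs_pow, abs_neg, mul_pow, abs_of_pos (hGpos θ k hθ)]
    ring
  have hcb : ∀ r:ℝ, 0 ≤ r → Summable fun k : ℕ => |bc k| * r^k := hcgen 2 two_pos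
  have hca : ∀ r:ℝ, 0 ≤ r → Summable fun k : ℕ => |ac k| * r^k := hcgen 1 one_pos
  set g : ℝ → ℝ := fun u => ∑' k : ℕ, bc k * u ^ k with hg
  set gd : ℝ → ℝ := fun u => ∑' k : ℕ, bc k * ((k:ℝ) * u ^ (k-1)) with hgd
  set hF : ℝ → ℝ := fun u => ∑' k : ℕ, ac k * u ^ k with hhF
  set hFd : ℝ → ℝ := fun u => ∑' k : ℕ, ac k * ((k:ℝ) * u ^ (k-1)) with hhFd
  -- series expansion of y₂
  have y2exp : ∀ s : ℝ, 0 ≤ s →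
      y₂ s = ∑' k : ℕ, ((-lam)^k / Real.Gamma (2*α*k + (α+1))) * s ^ (2*α*k + α) := by
    intro s hs
    rw [hy₂ s]
    simp only [mittagLeffler]
    rw [← tsum_mul_left]
    refine tsum_congr fun k => ?_
    have h2 : (s ^ (2*α)) ^ k = s ^ (2*α*k) := by
      rw [← Real.rpow_natCast (s ^ (2*α)) k, ← Real.rpow_mul hs]
    have h3 : s ^ (2*α*k + α) = s ^ (2*α*k) * s ^ α := by
      rw [Real.rpow_add' hs (by positivity)]
    rw [mul_pow, h2, h3]
    ring
  -- Step A: the fractional integral of y₂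
  have stepA : ∀ τ : ℝ, 0 < τ →
      (1 / Real.Gamma (1-α)) * ∫ s in (0:ℝ)..τ, y₂ s * (τ - s) ^ (-α)
        = τ * g (τ ^ (2*α)) := by
    intro τ hτ
    have hτu : (0:ℝ) < τ ^ (2*α) := Real.rpow_pos_of_pos hτ _
    have hpcond : ∀ k : ℕ, ((-lam)^k / Real.Gamma (2*α*k + (α+1)) : ℝ) = 0
        ∨ 0 < 2*α*(k:ℝ) + (α+1) := fun k => Or.inr (by positivity)
    have hscond : Summable fun k : ℕ => |(-lam)^k / Real.Gamma (2*α*(k:ℝ) + (α+1))| *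
        (Real.Gamma (2*α*(k:ℝ) + (α+1)) * Real.Gamma (1-α) /
          Real.Gamma (2*α*(k:ℝ) + (α+1) + (1-α)) *
          τ ^ (2*α*(k:ℝ) + (α+1) + (1-α) - 1)) := by
      apply summable_of_le_ml hδ (θ := 2) (C := Real.Gamma (1-α) * τ)
        (r := |lam| * τ^(2*α)) (by positivity)
      intro k
      have e1 : 2*α*(k:ℝ) + (α+1) + (1-α) = 2*α*(k:ℝ) + 2 := by ring
      have e2 : 2*α*(k:ℝ) + 2 - 1 = 2*α*(k:ℝ) + 1 := by ring
      rw [e1, e2]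
      have hpk : 0 < Real.Gamma (2*α*(k:ℝ) + (α+1)) := hGpos _ k (by linarith)
      have h2k : 0 < Real.Gamma (2*α*(k:ℝ) + 2) := hGpos 2 k two_pos
      have hpowτ : τ ^ (2*α*(k:ℝ) + 1) = (τ ^ (2*α))^k * τ := by
        rw [Real.rpow_add hτ, Real.rpow_one, ← Real.rpow_natCast (τ^(2*α)) k,
          ← Real.rpow_mul hτ.le]
      apply le_of_eq
      rw [abs_of_nonneg (by positivity), abs_div, abs_pow, abs_neg, abs_of_pos hpk,
        abs_of_pos h2k, hpowτ, mul_pow]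
      field_simp
    have hswap := swap_ml hτ (fun k : ℕ => (-lam)^k / Real.Gamma (2*α*(k:ℝ) + (α+1)))
      (fun k : ℕ => 2*α*(k:ℝ) + (α+1)) h1α hpcond hscond
    have hintg : ∫ s in (0:ℝ)..τ, y₂ s * (τ - s) ^ (-α)
        = ∫ s in Set.Ioo (0:ℝ) τ, (∑' k : ℕ,
            ((-lam)^k / Real.Gamma (2*α*(k:ℝ) + (α+1))) *
              (s ^ ((2*α*(k:ℝ) + (α+1)) - 1) * (τ - s) ^ ((1-α) - 1))) := by
      rw [intervalIntegral.integral_of_le hτ.le, MeasureTheory.integral_Ioc_eq_integral_Ioo]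
      apply MeasureTheory.setIntegral_congr_fun measurableSet_Ioo
      intro s hs
      simp only []
      rw [y2exp s hs.1.le, ← tsum_mul_right]
      refine tsum_congr fun k => ?_
      rw [show (2*α*(k:ℝ) + (α+1)) - 1 = 2*α*(k:ℝ) + α by ring,
        show (1-α) - 1 = -α by ring]
      ring
    rw [hintg, hswap, hg]
    simp only
    rw [← tsum_mul_left, ← tsum_mul_left]
    refine tsum_congr fun k => ?_
    have e1 : 2*α*(k:ℝ) + (α+1) + (1-α) = 2*α*(k:ℝ) + 2 := by ring
    have e2 : 2*α*(k:ℝ) + 2 - 1 = 2*α*(k:ℝ) + 1 := by ring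
    rw [e1, e2]
    have hpk : 0 < Real.Gamma (2*α*(k:ℝ) + (α+1)) := hGpos _ k (by linarith)
    have h2k : 0 < Real.Gamma (2*α*(k:ℝ) + 2) := hGpos 2 k two_pos
    have hpowτ : τ ^ (2*α*(k:ℝ) + 1) = (τ ^ (2*α))^k * τ := by
      rw [Real.rpow_add hτ, Real.rpow_one, ← Real.rpow_natCast (τ^(2*α)) k,
        ← Real.rpow_mul hτ.le]
    rw [hbc]
    simp only
    rw [hpowτ]
    field_simp
  -- combination identity: g u + 2α u g' u = hF u
  have hcomb : ∀ u : ℝ, g u + (2*α) * u * gd u = hF u := by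
    intro u
    have S1 : Summable fun k : ℕ => bc k * u ^ k := summable_abs_ps hcb u
    have S2 : Summable fun k : ℕ => ((2*α) * u) * (bc k * ((k:ℝ) * u ^ (k-1))) :=
      (summable_pow_mul hcb u).mul_left _
    have hgd2 : (2*α) * u * gd u = ∑' k : ℕ, ((2*α)*u) * (bc k * ((k:ℝ) * u^(k-1))) := by
      rw [hgd]; exact tsum_mul_left.symm
    rw [hgd2, hg, hhF]
    simp only []
    rw [← Summable.tsum_add S1 S2]
    refine tsum_congr fun k => ?_
    cases k with
    | zero =>
      norm_num [hbc, hac, Real.Gamma_two, Real.Gamma_one]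
    | succ n =>
      have h1 : (0:ℝ) < 2*α*((n:ℝ)+1) + 1 := by positivity
      have hG : Real.Gamma (2*α*((n:ℝ)+1) + 2) =
          (2*α*((n:ℝ)+1)+1) * Real.Gamma (2*α*((n:ℝ)+1)+1) := by
        rw [show 2*α*((n:ℝ)+1)+2 = (2*α*((n:ℝ)+1)+1)+1 by ring,
          Real.Gamma_add_one h1.ne']
      have h2 : 0 < Real.Gamma (2*α*((n:ℝ)+1)+1) := Real.Gamma_pos_of_pos (by positivity)
      rw [hbc, hac]
      simp only [Nat.add_sub_cancel]
      push_cast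
      rw [hG, pow_succ u n]
      field_simp
      ring
  -- Riemann-Liouville derivative of y₂
  have hRL : ∀ τ : ℝ, 0 < τ → RLderivLeft0 α y₂ τ = hF (τ ^ (2*α)) := by
    intro τ hτ
    have hev : (fun x => (1 / Real.Gamma (1 - α)) * ∫ s in (0:ℝ)..x, y₂ s * (x - s) ^ (-α))
        =ᶠ[nhds τ] (fun x => x * g (x ^ (2*α))) := by
      filter_upwards [Ioi_mem_nhds hτ] with x hx using stepA x hx
    have hrp : HasDerivAt (fun x : ℝ => x ^ (2*α)) (2*α * τ ^ (2*α - 1)) τ :=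
      Real.hasDerivAt_rpow_const (Or.inl hτ.ne')
    have hgder : HasDerivAt g (gd (τ ^ (2*α))) (τ ^ (2*α)) := hasDerivAt_ps hcb _
    have hcompd : HasDerivAt (fun x : ℝ => g (x ^ (2*α)))
        (gd (τ ^ (2*α)) * (2*α * τ ^ (2*α - 1))) τ := by have := hgder.comp τ hrp; exact this
    have hmul : HasDerivAt (fun x : ℝ => x * g (x ^ (2*α)))
        (1 * g (τ ^ (2*α)) + τ * (gd (τ ^ (2*α)) * (2*α * τ ^ (2*α - 1)))) τ :=
      (hasDerivAt_id τ).mul hcompd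
    have hder : RLderivLeft0 α y₂ τ
        = 1 * g (τ ^ (2*α)) + τ * (gd (τ ^ (2*α)) * (2*α * τ ^ (2*α-1))) := by
      show deriv (fun x => (1 / Real.Gamma (1 - α)) *
          ∫ s in (0:ℝ)..x, y₂ s * (x - s) ^ (-α)) τ = _
      rw [hev.deriv_eq]
      exact hmul.deriv
    rw [hder, ← hcomb (τ ^ (2*α))]
    have ht2 : τ ^ (2*α) = τ ^ (2*α-1) * τ := by
      nth_rewrite 1 [show (2*α:ℝ) = (2*α-1)+1 by ring]
      rw [Real.rpow_add hτ, Real.rpow_one]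
    nth_rewrite 4 [ht2]
    ring
  -- second derivative
  have hD2 : ∀ σ : ℝ, 0 < σ → deriv (RLderivLeft0 α y₂) σ
      = ∑' k : ℕ, ec k * σ ^ (2*α*(k:ℝ) - 1) := by
    intro σ hσ
    have hev : RLderivLeft0 α y₂ =ᶠ[nhds σ] (fun x => hF (x ^ (2*α))) := by
      filter_upwards [Ioi_mem_nhds hσ] with x hx using hRL x hx
    rw [hev.deriv_eq]
    have hrp : HasDerivAt (fun x : ℝ => x ^ (2*α)) (2*α * σ ^ (2*α - 1)) σ :=
      Real.hasDerivAt_rpow_const (Or.inl hσ.ne')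
    have hcompd : HasDerivAt (fun x : ℝ => hF (x ^ (2*α)))
        (hFd (σ ^ (2*α)) * (2*α * σ ^ (2*α - 1))) σ := (hasDerivAt_ps hca _).comp σ hrp
    rw [hcompd.deriv, hhFd]
    simp only []
    rw [← tsum_mul_right]
    refine tsum_congr fun k => ?_
    cases k with
    | zero => norm_num [hec, Real.Gamma_zero]
    | succ n =>
      have h1 : (0:ℝ) < 2*α*((n:ℝ)+1) := by positivity
      have hG : Real.Gamma (2*α*((n:ℝ)+1)+1) = (2*α*((n:ℝ)+1)) * Real.Gamma (2*α*((n:ℝ)+1)) :=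
        Real.Gamma_add_one h1.ne'
      have h2 : 0 < Real.Gamma (2*α*((n:ℝ)+1)) := Real.Gamma_pos_of_pos h1
      have hpow : ((σ^(2*α)) ^ n) * σ^(2*α-1) = σ ^ (2*α*((n:ℝ)+1) - 1) := by
        rw [← Real.rpow_natCast (σ^(2*α)) n, ← Real.rpow_mul hσ.le, ← Real.rpow_add hσ]
        ring_nf
      rw [hac, hec]
      simp only [Nat.add_sub_cancel]
      push_cast
      rw [hG, ← hpow]
      field_simp
  -- final assembly
  intro t ht
  have hpcond : ∀ k : ℕ, ec k = 0 ∨ 0 < 2*α*(k:ℝ) := by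
    intro k
    cases k with
    | zero =>
      left
      rw [hec]
      norm_num [Real.Gamma_zero]
    | succ n =>
      right
      have : (0:ℝ) < ((n+1:ℕ):ℝ) := by exact_mod_cast Nat.succ_pos n
      positivity
  have hscond : Summable fun k : ℕ => |ec k| * (Real.Gamma (2*α*(k:ℝ)) * Real.Gamma (1-α) /
      Real.Gamma (2*α*(k:ℝ) + (1-α)) * t ^ (2*α*(k:ℝ) + (1-α) - 1)) := by
    apply summable_of_le_ml hδ (θ := 1-α) (C := Real.Gamma (1-α) * t ^ (-α))
      (r := |lam| * t^(2*α)) (by positivity)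
    intro k
    cases k with
    | zero =>
      have h0 : ec 0 = 0 := by rw [hec]; norm_num [Real.Gamma_zero]
      rw [h0]
      simp only [abs_zero, zero_mul, abs_zero]
      positivity
    | succ n =>
      have h1 : (0:ℝ) < 2*α*(((n+1:ℕ)):ℝ) := by
        have : (0:ℝ) < ((n+1:ℕ):ℝ) := by exact_mod_cast Nat.succ_pos n
        positivity
      have h2 : 0 < Real.Gamma (2*α*(((n+1:ℕ)):ℝ)) := Real.Gamma_pos_of_pos h1
      have h3 : 0 < Real.Gamma (2*α*(((n+1:ℕ)):ℝ) + (1-α)) :=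
        Real.Gamma_pos_of_pos (by linarith)
      have hexp : t ^ (2*α*(((n+1:ℕ)):ℝ) + (1-α) - 1)
          = (t ^ (2*α))^(n+1) * t ^ (-α) := by
        rw [show 2*α*(((n+1:ℕ)):ℝ) + (1-α) - 1 = 2*α*(((n+1:ℕ)):ℝ) + (-α) by ring,
          Real.rpow_add ht, ← Real.rpow_natCast (t^(2*α)) (n+1), ← Real.rpow_mul ht.le]
      apply le_of_eq
      rw [hec]
      simp only []
      rw [abs_of_nonneg (by positivity), abs_div, abs_pow, abs_neg, abs_of_pos h2,
        abs_of_pos (hGpos (1-α) (n+1) h1α), hexp, mul_pow]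
      field_simp
  have hswap := swap_ml ht ec (fun k : ℕ => 2*α*(k:ℝ)) h1α hpcond hscond
  have hcap : CaputoDerivLeft0 α (RLderivLeft0 α y₂) t
      = (1/Real.Gamma (1-α)) * ∑' k : ℕ, ec k * (Real.Gamma (2*α*(k:ℝ)) * Real.Gamma (1-α) /
          Real.Gamma (2*α*(k:ℝ) + (1-α)) * t ^ (2*α*(k:ℝ) + (1-α) - 1)) := by
    show (1 / Real.Gamma (1 - α)) *
        ∫ s in (0:ℝ)..t, deriv (RLderivLeft0 α y₂) s * (t - s) ^ (-α) = _
    rw [← hswap]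
    congr 1
    rw [intervalIntegral.integral_of_le ht.le, MeasureTheory.integral_Ioc_eq_integral_Ioo]
    apply MeasureTheory.setIntegral_congr_fun measurableSet_Ioo
    intro s hs
    simp only []
    rw [hD2 s hs.1, ← tsum_mul_right]
    refine tsum_congr fun k => ?_
    rw [show (1-α) - 1 = -α by ring, mul_assoc]
  rw [hcap, ← tsum_mul_left]
  have hFsum : Summable (fun k : ℕ => (1/Real.Gamma (1-α)) * (ec k *
      (Real.Gamma (2*α*(k:ℝ)) * Real.Gamma (1-α) /
        Real.Gamma (2*α*(k:ℝ) + (1-α)) * t ^ (2*α*(k:ℝ) + (1-α) - 1)))) := by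
    apply Summable.mul_left
    apply Summable.of_abs
    apply Summable.of_nonneg_of_le (fun k => abs_nonneg _) _ hscond
    intro k
    rw [abs_mul]
    cases k with
    | zero => norm_num [Real.Gamma_zero]
    | succ n =>
      have h1 : (0:ℝ) < 2*α*(((n+1:ℕ)):ℝ) := by
        have : (0:ℝ) < ((n+1:ℕ):ℝ) := by exact_mod_cast Nat.succ_pos n
        positivity
      have h2 : 0 < Real.Gamma (2*α*(((n+1:ℕ)):ℝ)) := Real.Gamma_pos_of_pos h1
      have h3 : 0 < Real.Gamma (2*α*(((n+1:ℕ)):ℝ) + (1-α)) :=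
        Real.Gamma_pos_of_pos (by linarith)
      have h4 : 0 < t ^ (2*α*(((n+1:ℕ)):ℝ) + (1-α) - 1) := Real.rpow_pos_of_pos ht _
      have h5 : (0:ℝ) < Real.Gamma (2*α*(((n+1:ℕ)):ℝ)) * Real.Gamma (1-α) /
          Real.Gamma (2*α*(((n+1:ℕ)):ℝ) + (1-α)) * t ^ (2*α*(((n+1:ℕ)):ℝ) + (1-α) - 1) :=
        mul_pos (div_pos (mul_pos h2 hΓ1α) h3) h4
      rw [abs_of_nonneg h5.le]
  rw [Summable.tsum_eq_zero_add hFsum]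
  have hzero : (1/Real.Gamma (1-α)) * (ec 0 *
      (Real.Gamma (2*α*((0:ℕ):ℝ)) * Real.Gamma (1-α) /
        Real.Gamma (2*α*((0:ℕ):ℝ) + (1-α)) * t ^ (2*α*((0:ℕ):ℝ) + (1-α) - 1))) = 0 := by
    norm_num [Real.Gamma_zero]
  rw [hzero, zero_add]
  have hterm : ∀ n : ℕ, (1/Real.Gamma (1-α)) * (ec (n+1) *
      (Real.Gamma (2*α*(((n+1:ℕ)):ℝ)) * Real.Gamma (1-α) /
        Real.Gamma (2*α*(((n+1:ℕ)):ℝ) + (1-α)) * t ^ (2*α*(((n+1:ℕ)):ℝ) + (1-α) - 1)))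
      = (-lam) * (t ^ α * ((-lam * t ^ (2*α)) ^ n / Real.Gamma (2*α*(n:ℝ) + (α+1)))) := by
    intro n
    have h1 : (0:ℝ) < 2*α*(((n+1:ℕ)):ℝ) := by
      have : (0:ℝ) < ((n+1:ℕ):ℝ) := by exact_mod_cast Nat.succ_pos n
      positivity
    have h2 : 0 < Real.Gamma (2*α*(((n+1:ℕ)):ℝ)) := Real.Gamma_pos_of_pos h1
    have h5 : 0 < Real.Gamma (2*α*(n:ℝ) + (α+1)) := by
      apply Real.Gamma_pos_of_pos; positivity
    have e1 : 2*α*(((n+1:ℕ)):ℝ) + (1-α) = 2*α*(n:ℝ) + (α+1) := by push_cast; ring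
    have hexp : t ^ (2*α*(((n+1:ℕ)):ℝ) + (1-α) - 1) = (t ^ (2*α))^n * t ^ α := by
      rw [show 2*α*(((n+1:ℕ)):ℝ) + (1-α) - 1 = 2*α*(n:ℝ) + α by push_cast; ring,
        Real.rpow_add ht, ← Real.rpow_natCast (t^(2*α)) n, ← Real.rpow_mul ht.le]
    rw [hec]
    simp only []
    rw [hexp, e1, mul_pow]
    rw [show ((-lam) ^ (n+1) : ℝ) = (-lam) * (-lam)^n by ring]
    field_simp
  rw [tsum_congr hterm, tsum_mul_left, tsum_mul_left]
  rw [hy₂ t]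
  simp only [mittagLeffler]
  ring
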